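/- The Jacobian determinant of the Möbius translation T_a at x ∈ B^n equals ((1 - ‖a‖²)/(1 - 2⟨x,a⟩ + ‖x‖²‖a‖²))^n. -/

import Mathlib

set_option maxHeartbeats 1000000

open scoped RealInnerProductSpace

/-- Möbius addition on the unit ball of ℝⁿ. -/
noncomputable def mobiusAdd {n : ℕ} (x y : EuclideanSpace ℝ (Fin n)) :
    EuclideanSpace ℝ (Fin n) :=
  ((1 + 2 * (inner ℝ x y : ℝ) + ‖y‖ ^ 2) / (1 + 2 * (inner ℝ x y : ℝ) + ‖x‖ ^ 2 * ‖y‖ ^ 2)) • x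
    + ((1 - ‖x‖ ^ 2) / (1 + 2 * (inner ℝ x y : ℝ) + ‖x‖ ^ 2 * ‖y‖ ^ 2)) • y

/-- Möbius translation `T_a x = (-a) ⊕ x`. -/
noncomputable def mobiusTrans {n : ℕ} (a x : EuclideanSpace ℝ (Fin n)) :
    EuclideanSpace ℝ (Fin n) :=
  mobiusAdd (-a) x

section aux

variable {n : ℕ}

/-- The candidate derivative of `mobiusAdd b` at `x`. -/
noncomputable def mAddDeriv (β u1 u2 w1 w2 : ℝ) (b x : EuclideanSpace ℝ (Fin n)) :
    EuclideanSpace ℝ (Fin n) →L[ℝ] EuclideanSpace ℝ (Fin n) :=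
  β • (ContinuousLinearMap.id ℝ (EuclideanSpace ℝ (Fin n))
    + (u1 • innerSL ℝ b + u2 • innerSL ℝ x).smulRight b
    + (w1 • innerSL ℝ b + w2 • innerSL ℝ x).smulRight x)

lemma hasFDerivAt_inner_self (x : EuclideanSpace ℝ (Fin n)) :
    HasFDerivAt (fun y : EuclideanSpace ℝ (Fin n) => (⟪y, y⟫ : ℝ)) (2 • innerSL ℝ x) x := by
  have h := (hasFDerivAt_id x).inner ℝ (hasFDerivAt_id x)
  refine h.congr_fderiv ?_
  ext v
  simp [fderivInnerCLM, real_inner_comm, two_smul]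

lemma hasFDerivAt_mobiusAdd (b x : EuclideanSpace ℝ (Fin n))
    (hD : (1 + 2 * ⟪b, x⟫ + ‖b‖ ^ 2 * ‖x‖ ^ 2 : ℝ) ≠ 0) :
    HasFDerivAt (mobiusAdd b)
      (mAddDeriv ((1 - ‖b‖ ^ 2) / (1 + 2 * ⟪b, x⟫ + ‖b‖ ^ 2 * ‖x‖ ^ 2))
        (-2 * ‖x‖ ^ 2 / (1 + 2 * ⟪b, x⟫ + ‖b‖ ^ 2 * ‖x‖ ^ 2))
        (2 * (1 + 2 * ⟪b, x⟫) / (1 + 2 * ⟪b, x⟫ + ‖b‖ ^ 2 * ‖x‖ ^ 2))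
        (-2 / (1 + 2 * ⟪b, x⟫ + ‖b‖ ^ 2 * ‖x‖ ^ 2))
        (-2 * ‖b‖ ^ 2 / (1 + 2 * ⟪b, x⟫ + ‖b‖ ^ 2 * ‖x‖ ^ 2)) b x) x := by
  set p : ℝ := ‖b‖ ^ 2 with hp
  set q : ℝ := ‖x‖ ^ 2 with hq
  set c : ℝ := ⟪b, x⟫ with hc
  set D : ℝ := 1 + 2 * c + p * q with hDdef
  set N : ℝ := 1 + 2 * c + q with hNdef
  -- derivatives of the numerator and denominator
  have hNf : HasFDerivAt (fun y : EuclideanSpace ℝ (Fin n) => (1 + 2 * ⟪b, y⟫ + ⟪y, y⟫ : ℝ))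
      ((2 : ℝ) • innerSL ℝ b + (2 : ℝ) • innerSL ℝ x) x := by
    have h1 := ((innerSL ℝ b).hasFDerivAt (x := x)).const_mul (2 : ℝ)
    have h2 := hasFDerivAt_inner_self x
    have := ((hasFDerivAt_const (1 : ℝ) x).add h1).add h2
    refine this.congr_fderiv ?_
    ext v
    simp [two_smul]
    try ring
  have hDf : HasFDerivAt (fun y : EuclideanSpace ℝ (Fin n) => (1 + 2 * ⟪b, y⟫ + p * ⟪y, y⟫ : ℝ))
      ((2 : ℝ) • innerSL ℝ b + (2 * p) • innerSL ℝ x) x := by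
    have h1 := ((innerSL ℝ b).hasFDerivAt (x := x)).const_mul (2 : ℝ)
    have h2 := (hasFDerivAt_inner_self x).const_mul p
    have := ((hasFDerivAt_const (1 : ℝ) x).add h1).add h2
    refine this.congr_fderiv ?_
    ext v
    simp [two_smul]
    try ring
  have hDx : (1 + 2 * ⟪b, x⟫ + p * ⟪x, x⟫ : ℝ) = D := by
    rw [hDdef, hc, hq, real_inner_self_eq_norm_sq]
  have hDne : (1 + 2 * ⟪b, x⟫ + p * ⟪x, x⟫ : ℝ) ≠ 0 := by rw [hDx]; exact hD
  have hinv : HasFDerivAt (fun y : EuclideanSpace ℝ (Fin n) =>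
      (1 + 2 * ⟪b, y⟫ + p * ⟪y, y⟫ : ℝ)⁻¹)
      ((-(D ^ 2)⁻¹) • ((2 : ℝ) • innerSL ℝ b + (2 * p) • innerSL ℝ x)) x := by
    have h := (hasDerivAt_inv hDne).comp_hasFDerivAt x hDf
    rwa [hDx] at h
  -- α : coefficient of b
  have hα : HasFDerivAt (fun y : EuclideanSpace ℝ (Fin n) =>
      ((1 + 2 * ⟪b, y⟫ + ⟪y, y⟫) * (1 + 2 * ⟪b, y⟫ + p * ⟪y, y⟫)⁻¹ : ℝ))
      ((N : ℝ) • ((-(D ^ 2)⁻¹) • ((2 : ℝ) • innerSL ℝ b + (2 * p) • innerSL ℝ x))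
        + (D : ℝ)⁻¹ • ((2 : ℝ) • innerSL ℝ b + (2 : ℝ) • innerSL ℝ x)) x := by
    have h := hNf.mul hinv
    have hNx : (1 + 2 * ⟪b, x⟫ + ⟪x, x⟫ : ℝ) = N := by
      rw [hNdef, hc, hq, real_inner_self_eq_norm_sq]
    rw [hNx, hDx] at h
    exact h
  -- β : coefficient of y
  have hβ : HasFDerivAt (fun y : EuclideanSpace ℝ (Fin n) =>
      ((1 - p) * (1 + 2 * ⟪b, y⟫ + p * ⟪y, y⟫)⁻¹ : ℝ))
      ((1 - p) • ((-(D ^ 2)⁻¹) • ((2 : ℝ) • innerSL ℝ b + (2 * p) • innerSL ℝ x))) x := by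
    have h := hinv.const_mul (1 - p)
    convert h using 1
  -- assemble
  have hfun : (mobiusAdd b) = fun y : EuclideanSpace ℝ (Fin n) =>
      ((1 + 2 * ⟪b, y⟫ + ⟪y, y⟫) * (1 + 2 * ⟪b, y⟫ + p * ⟪y, y⟫)⁻¹ : ℝ) • b
        + ((1 - p) * (1 + 2 * ⟪b, y⟫ + p * ⟪y, y⟫)⁻¹ : ℝ) • y := by
    funext y
    simp only [mobiusAdd, real_inner_self_eq_norm_sq, div_eq_mul_inv, hp]
  rw [hfun]
  have h := (hα.smul_const b).add (hβ.smul (hasFDerivAt_id x))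
  refine h.congr_fderiv ?_
  have hβx : ((1 - p) * (1 + 2 * ⟪b, x⟫ + p * ⟪x, x⟫)⁻¹ : ℝ) = (1 - p) / D := by
    rw [hDx, div_eq_mul_inv]
  ext v i
  simp only [mAddDeriv, ContinuousLinearMap.add_apply, ContinuousLinearMap.smul_apply,
    ContinuousLinearMap.smulRight_apply, ContinuousLinearMap.id_apply, innerSL_apply_apply,
    ContinuousLinearMap.coe_smul', Pi.smul_apply, PiLp.add_apply, PiLp.smul_apply,
    smul_eq_mul, id_eq, hβx]
  have hD' : (1 + 2 * c + p * q : ℝ) ≠ 0 := by rw [← hDdef]; exact hD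
  rw [hNdef, hDdef]
  have hD'' : (1 + 2 * c + q * p : ℝ) ≠ 0 := by rw [mul_comm q p]; exact hD'
  field_simp
  ring



lemma det_mAddDeriv (b x : EuclideanSpace ℝ (Fin n)) (β u1 u2 w1 w2 : ℝ) :
    LinearMap.det ((mAddDeriv β u1 u2 w1 w2 b x :
        EuclideanSpace ℝ (Fin n) →L[ℝ] EuclideanSpace ℝ (Fin n)) :
        EuclideanSpace ℝ (Fin n) →ₗ[ℝ] EuclideanSpace ℝ (Fin n))
      = β ^ n * ((1 + (u1 * ⟪b, b⟫ + u2 * ⟪x, b⟫)) * (1 + (w1 * ⟪b, x⟫ + w2 * ⟪x, x⟫))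
          - (u1 * ⟪b, x⟫ + u2 * ⟪x, x⟫) * (w1 * ⟪b, b⟫ + w2 * ⟪x, b⟫)) := by
  classical
  set L0 : EuclideanSpace ℝ (Fin n) →L[ℝ] EuclideanSpace ℝ (Fin n) :=
    ContinuousLinearMap.id ℝ (EuclideanSpace ℝ (Fin n))
      + (u1 • innerSL ℝ b + u2 • innerSL ℝ x).smulRight b
      + (w1 • innerSL ℝ b + w2 • innerSL ℝ x).smulRight x with hL0
  have hcoe : ((mAddDeriv β u1 u2 w1 w2 b x :
      EuclideanSpace ℝ (Fin n) →L[ℝ] EuclideanSpace ℝ (Fin n)) :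
      EuclideanSpace ℝ (Fin n) →ₗ[ℝ] EuclideanSpace ℝ (Fin n)) = β • (L0 :
      EuclideanSpace ℝ (Fin n) →ₗ[ℝ] EuclideanSpace ℝ (Fin n)) := by
    ext v
    simp [mAddDeriv, hL0]
  rw [hcoe, LinearMap.det_smul, finrank_euclideanSpace_fin]
  congr 1
  -- compute det of L0 via matrices
  set bas := (EuclideanSpace.basisFun (Fin n) ℝ).toBasis with hbas
  rw [← LinearMap.det_toMatrix bas]
  set A : Matrix (Fin n) (Fin 2) ℝ := Matrix.of fun i k => ![b i, x i] k with hA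
  set B : Matrix (Fin 2) (Fin n) ℝ :=
    Matrix.of fun k j => ![u1 * b j + u2 * x j, w1 * b j + w2 * x j] k with hB
  have hM : LinearMap.toMatrix bas bas (L0 :
      EuclideanSpace ℝ (Fin n) →ₗ[ℝ] EuclideanSpace ℝ (Fin n)) = 1 + A * B := by
    ext i j
    rw [LinearMap.toMatrix_apply]
    have hbj : bas j = EuclideanSpace.single j 1 := by
      rw [hbas, OrthonormalBasis.coe_toBasis, EuclideanSpace.basisFun_apply]
    have hrepr : ∀ y : EuclideanSpace ℝ (Fin n), bas.repr y i = y i := fun y => by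
      rw [hbas, OrthonormalBasis.coe_toBasis_repr_apply, EuclideanSpace.basisFun_repr]
    rw [hbj, hrepr]
    simp only [hL0, ContinuousLinearMap.coe_coe, ContinuousLinearMap.add_apply,
      ContinuousLinearMap.id_apply, ContinuousLinearMap.smulRight_apply,
      ContinuousLinearMap.smul_apply, innerSL_apply_apply, smul_eq_mul,
      EuclideanSpace.inner_single_right, conj_trivial, mul_one,
      Matrix.add_apply, Matrix.one_apply, Matrix.mul_apply, Fin.sum_univ_two,
      hA, hB, Matrix.of_apply, Matrix.cons_val_zero, Matrix.cons_val_one, Matrix.head_cons,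
      PiLp.add_apply, PiLp.smul_apply, EuclideanSpace.single_apply]
    by_cases h : i = j <;> simp [h] <;> ring
  rw [hM, Matrix.det_one_add_mul_comm]
  have key : ∀ u w : EuclideanSpace ℝ (Fin n), (∑ j, u j * w j) = ⟪u, w⟫ := fun u w => by
    simp [PiLp.inner_apply]; exact Finset.sum_congr rfl fun i _ => mul_comm _ _
  have hBA : (1 : Matrix (Fin 2) (Fin 2) ℝ) + B * A =
      !![1 + (u1 * ⟪b, b⟫ + u2 * ⟪x, b⟫), u1 * ⟪b, x⟫ + u2 * ⟪x, x⟫;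
         w1 * ⟪b, b⟫ + w2 * ⟪x, b⟫, 1 + (w1 * ⟪b, x⟫ + w2 * ⟪x, x⟫)] := by
    have e1 : ∀ (r s : ℝ) (u v w : EuclideanSpace ℝ (Fin n)),
        (∑ j, (r * u j + s * v j) * w j) = r * ⟪u, w⟫ + s * ⟪v, w⟫ := by
      intro r s u v w
      rw [← key, ← key, Finset.mul_sum, Finset.mul_sum, ← Finset.sum_add_distrib]
      exact Finset.sum_congr rfl fun j _ => by ring
    ext k l
    fin_cases k <;> fin_cases l <;>
      simp [Matrix.mul_apply, Matrix.one_apply, hA, hB, e1]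
  rw [hBA, Matrix.det_fin_two_of]

end aux

theorem mobiusTrans_jacobian_det {n : ℕ} (hn : 2 ≤ n)
    (a x : EuclideanSpace ℝ (Fin n)) (ha : ‖a‖ < 1) (hx : ‖x‖ < 1) :
    LinearMap.det
        ((fderiv ℝ (mobiusTrans a) x : EuclideanSpace ℝ (Fin n) →L[ℝ] EuclideanSpace ℝ (Fin n)) :
          EuclideanSpace ℝ (Fin n) →ₗ[ℝ] EuclideanSpace ℝ (Fin n))
      = ((1 - ‖a‖ ^ 2) / (1 - 2 * (inner ℝ x a : ℝ) + ‖x‖ ^ 2 * ‖a‖ ^ 2)) ^ n := by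
  have hax : |(⟪a, x⟫ : ℝ)| ≤ ‖a‖ * ‖x‖ := abs_real_inner_le_norm a x
  rw [abs_le] at hax
  have hprod : ‖a‖ * ‖x‖ < 1 := by
    nlinarith [norm_nonneg a, norm_nonneg x]
  have hDpos : (0 : ℝ) < 1 - 2 * ⟪a, x⟫ + ‖a‖ ^ 2 * ‖x‖ ^ 2 := by
    nlinarith [sq_nonneg (1 - ‖a‖ * ‖x‖)]
  have hD : (1 + 2 * ⟪(-a : EuclideanSpace ℝ (Fin n)), x⟫
      + ‖(-a : EuclideanSpace ℝ (Fin n))‖ ^ 2 * ‖x‖ ^ 2 : ℝ) ≠ 0 := by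
    simp only [inner_neg_left, norm_neg]
    nlinarith
  have hfun : mobiusTrans a = mobiusAdd (-a) := by
    funext y; rfl
  rw [hfun, (hasFDerivAt_mobiusAdd (-a) x hD).fderiv, det_mAddDeriv]
  simp only [inner_neg_left, inner_neg_right, norm_neg, neg_neg,
    real_inner_self_eq_norm_sq, real_inner_comm x a]
  set c : ℝ := ⟪x, a⟫ with hc
  set p : ℝ := ‖a‖ ^ 2 with hp
  set q : ℝ := ‖x‖ ^ 2 with hq
  have hcomm : (⟪a, x⟫ : ℝ) = c := (real_inner_comm a x).symm
  have hDpos' : (0 : ℝ) < 1 - 2 * c + q * p := by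
    rw [← hcomm]; rw [hp, hq] at hDpos ⊢; linarith
  have e : (1 + 2 * -c + p * q : ℝ) = 1 - 2 * c + q * p := by ring
  rw [e]
  have hne : (1 - 2 * c + q * p : ℝ) ≠ 0 := ne_of_gt hDpos'
  conv_rhs => rw [← mul_one (((1 - p) / (1 - 2 * c + q * p)) ^ n)]
  congr 1
  field_simp
  ring
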